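/- There exists a constant c with c < 3√2 such that for all u, v : ℤ → ℝ, every integer m > 1 and every η > 0: |Σ_{x=−m}^{m} ∂u(x)·∂v(x)| ≤ (1/2)·(2m+1)²·(1/η)·Σ_{x=−m}^{m} ((∂*∂u)(x))² + (1/2)·(η/(2m+1)²)·Σ_{x=−m}^{m} v(x)² + ((2m+1)/(2η))·[ (∂u(−m−1))² + (∂u(m))² ] + (c·η/2)·[ (1/(2m+1)²)·Σ_{x=−m}^{m} v(x)² + Σ_{x=−m}^{m} (∂v(x))² ]. -/

import Mathlib

/-- The forward difference operator `∂v(x) = v(x+1) − v(x)` on `ℤ`. -/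
def fdZ (v : ℤ → ℝ) (x : ℤ) : ℝ := v (x + 1) - v x

/-- The backward difference operator `∂*v(x) = v(x−1) − v(x)` on `ℤ`. -/
def bdZ (v : ℤ → ℝ) (x : ℤ) : ℝ := v (x - 1) - v x

lemma Icc_insert_top (A B : ℤ) (h : A ≤ B + 1) :
    Finset.Icc A (B + 1) = insert (B + 1) (Finset.Icc A B) := by
  ext t; simp only [Finset.mem_Icc, Finset.mem_insert]; omega

lemma telescopeZ (b : ℤ → ℝ) (A B : ℤ) (hB : A - 1 ≤ B) :
    ∑ t ∈ Finset.Icc A B, (b (t + 1) - b t) = b (B + 1) - b A := by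
  refine Int.le_induction (motive := fun B _ => ∑ t ∈ Finset.Icc A B, (b (t + 1) - b t) = b (B + 1) - b A) ?_ ?_ B hB
  · show ∑ t ∈ Finset.Icc A (A - 1), (b (t + 1) - b t) = b (A - 1 + 1) - b A
    rw [Finset.Icc_eq_empty (by omega), Finset.sum_empty,
      show A - 1 + 1 = A by ring, sub_self]
  · intro B hB ih
    rw [Icc_insert_top A B (by omega), Finset.sum_insert (by simp), ih]
    ring

lemma sumpartsZ (a b : ℤ → ℝ) (A B : ℤ) (hB : A ≤ B) :
    ∑ x ∈ Finset.Icc A B, a x * (b (x + 1) - b x)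
      = ∑ x ∈ Finset.Icc A B, (a (x - 1) - a x) * b x
        + a B * b (B + 1) - a (A - 1) * b A := by
  refine Int.le_induction (motive := fun B _ => ∑ x ∈ Finset.Icc A B, a x * (b (x + 1) - b x)
      = ∑ x ∈ Finset.Icc A B, (a (x - 1) - a x) * b x + a B * b (B + 1) - a (A - 1) * b A) ?_ ?_ B hB
  · show ∑ x ∈ Finset.Icc A A, a x * (b (x + 1) - b x)
      = ∑ x ∈ Finset.Icc A A, (a (x - 1) - a x) * b x + a A * b (A + 1) - a (A - 1) * b A
    simp only [Finset.Icc_self, Finset.sum_singleton]; ring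
  · intro B hB ih
    rw [Icc_insert_top A B (by omega), Finset.sum_insert (by simp),
      Finset.sum_insert (by simp), ih, show B + 1 - 1 = B by ring]
    ring

lemma young (K A B : ℝ) (hK : 0 < K) : A * B ≤ K / 2 * A ^ 2 + 1 / (2 * K) * B ^ 2 := by
  have key : 2 * K * (A * B) ≤ 2 * K * (K / 2 * A ^ 2 + 1 / (2 * K) * B ^ 2) := by
    have h2 : 2 * K * (K / 2 * A ^ 2 + 1 / (2 * K) * B ^ 2) = K ^ 2 * A ^ 2 + B ^ 2 := by
      field_simp
    rw [h2]; nlinarith [sq_nonneg (K * A - B)]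
  exact le_of_mul_le_mul_left key (by positivity)

lemma cardI (m : ℕ) : ((Finset.Icc (-(m : ℤ)) (m : ℤ)).card : ℝ) = 2 * (m : ℝ) + 1 := by
  rw [Int.card_Icc, show (m : ℤ) + 1 - -(m : ℤ) = ((2 * m + 1 : ℕ) : ℤ) by push_cast; ring,
    Int.toNat_natCast]
  push_cast; ring

lemma trace_top (v : ℤ → ℝ) (m : ℕ) :
    v ((m : ℤ) + 1) ^ 2 ≤
      2 / (2 * (m : ℝ) + 1) * ∑ x ∈ Finset.Icc (-(m : ℤ)) (m : ℤ), v x ^ 2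
      + 2 * (2 * (m : ℝ) + 1) * ∑ x ∈ Finset.Icc (-(m : ℤ)) (m : ℤ), fdZ v x ^ 2 := by
  set I := Finset.Icc (-(m : ℤ)) (m : ℤ) with hI
  set n : ℝ := 2 * (m : ℝ) + 1 with hn
  have hnpos : 0 < n := by positivity
  set S2 := ∑ x ∈ I, v x ^ 2 with hS2
  set D2 := ∑ x ∈ I, fdZ v x ^ 2 with hD2
  have hD2nn : 0 ≤ D2 := Finset.sum_nonneg fun i _ => sq_nonneg _
  have key : ∀ x ∈ I, v ((m : ℤ) + 1) ^ 2 ≤ 2 * v x ^ 2 + 2 * n * D2 := by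
    intro x hx
    rw [hI, Finset.mem_Icc] at hx
    have ht : v ((m : ℤ) + 1) - v x = ∑ t ∈ Finset.Icc x (m : ℤ), fdZ v t :=
      (telescopeZ v x m (by omega)).symm
    have hsq : (∑ t ∈ Finset.Icc x (m : ℤ), fdZ v t) ^ 2 ≤
        ((Finset.Icc x (m : ℤ)).card : ℝ) * ∑ t ∈ Finset.Icc x (m : ℤ), fdZ v t ^ 2 :=
      sq_sum_le_card_mul_sum_sq
    have hcnn : (0 : ℝ) ≤ ((Finset.Icc x (m : ℤ)).card : ℝ) := Nat.cast_nonneg _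
    have hc : ((Finset.Icc x (m : ℤ)).card : ℝ) ≤ n := by
      rw [Int.card_Icc, hn]
      have h1 : ((m : ℤ) + 1 - x).toNat ≤ 2 * m + 1 := by omega
      calc (((m : ℤ) + 1 - x).toNat : ℝ) ≤ ((2 * m + 1 : ℕ) : ℝ) := by exact_mod_cast h1
        _ = 2 * (m : ℝ) + 1 := by push_cast; ring
    have hsnn : 0 ≤ ∑ t ∈ Finset.Icc x (m : ℤ), fdZ v t ^ 2 :=
      Finset.sum_nonneg fun i _ => sq_nonneg _
    have hsub : ∑ t ∈ Finset.Icc x (m : ℤ), fdZ v t ^ 2 ≤ D2 :=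
      Finset.sum_le_sum_of_subset_of_nonneg
        (Finset.Icc_subset_Icc (by omega) le_rfl) (fun i _ _ => sq_nonneg _)
    have hv : v ((m : ℤ) + 1) = v x + ∑ t ∈ Finset.Icc x (m : ℤ), fdZ v t := by linarith
    rw [hv]
    nlinarith [sq_nonneg (v x - (∑ t ∈ Finset.Icc x (m : ℤ), fdZ v t)),
      mul_le_mul hc hsub hsnn (le_of_lt hnpos), hsq]
  have hsum2 : n * v ((m : ℤ) + 1) ^ 2 ≤ 2 * S2 + n * (2 * n * D2) := by
    calc n * v ((m : ℤ) + 1) ^ 2 = ∑ _x ∈ I, v ((m : ℤ) + 1) ^ 2 := by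
          rw [Finset.sum_const, nsmul_eq_mul, hI, cardI]
      _ ≤ ∑ x ∈ I, (2 * v x ^ 2 + 2 * n * D2) := Finset.sum_le_sum key
      _ = 2 * S2 + n * (2 * n * D2) := by
          rw [Finset.sum_add_distrib, Finset.sum_const, nsmul_eq_mul, hI, cardI,
            ← Finset.mul_sum, ← hn, ← hI, ← hS2]
  have h1 : v ((m : ℤ) + 1) ^ 2 ≤ (2 * S2 + n * (2 * n * D2)) / n := by
    rw [le_div_iff₀ hnpos]; nlinarith [hsum2]
  calc v ((m : ℤ) + 1) ^ 2 ≤ (2 * S2 + n * (2 * n * D2)) / n := h1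
    _ = 2 / n * S2 + 2 * n * D2 := by field_simp

lemma trace_bot (v : ℤ → ℝ) (m : ℕ) :
    v (-(m : ℤ)) ^ 2 ≤
      2 / (2 * (m : ℝ) + 1) * ∑ x ∈ Finset.Icc (-(m : ℤ)) (m : ℤ), v x ^ 2
      + 2 * (2 * (m : ℝ) + 1) * ∑ x ∈ Finset.Icc (-(m : ℤ)) (m : ℤ), fdZ v x ^ 2 := by
  set I := Finset.Icc (-(m : ℤ)) (m : ℤ) with hI
  set n : ℝ := 2 * (m : ℝ) + 1 with hn
  have hnpos : 0 < n := by positivity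
  set S2 := ∑ x ∈ I, v x ^ 2 with hS2
  set D2 := ∑ x ∈ I, fdZ v x ^ 2 with hD2
  have hD2nn : 0 ≤ D2 := Finset.sum_nonneg fun i _ => sq_nonneg _
  have key : ∀ x ∈ I, v (-(m : ℤ)) ^ 2 ≤ 2 * v x ^ 2 + 2 * n * D2 := by
    intro x hx
    rw [hI, Finset.mem_Icc] at hx
    have ht : v x - v (-(m : ℤ)) = ∑ t ∈ Finset.Icc (-(m : ℤ)) (x - 1), fdZ v t := by
      have h := telescopeZ v (-(m : ℤ)) (x - 1) (by omega)
      rw [show x - 1 + 1 = x by ring] at h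
      exact h.symm
    have hsq : (∑ t ∈ Finset.Icc (-(m : ℤ)) (x - 1), fdZ v t) ^ 2 ≤
        ((Finset.Icc (-(m : ℤ)) (x - 1)).card : ℝ) *
          ∑ t ∈ Finset.Icc (-(m : ℤ)) (x - 1), fdZ v t ^ 2 :=
      sq_sum_le_card_mul_sum_sq
    have hc : ((Finset.Icc (-(m : ℤ)) (x - 1)).card : ℝ) ≤ n := by
      rw [Int.card_Icc, hn]
      have h1 : (x - 1 + 1 - -(m : ℤ)).toNat ≤ 2 * m + 1 := by omega
      calc ((x - 1 + 1 - -(m : ℤ)).toNat : ℝ) ≤ ((2 * m + 1 : ℕ) : ℝ) := by exact_mod_cast h1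
        _ = 2 * (m : ℝ) + 1 := by push_cast; ring
    have hsnn : 0 ≤ ∑ t ∈ Finset.Icc (-(m : ℤ)) (x - 1), fdZ v t ^ 2 :=
      Finset.sum_nonneg fun i _ => sq_nonneg _
    have hsub : ∑ t ∈ Finset.Icc (-(m : ℤ)) (x - 1), fdZ v t ^ 2 ≤ D2 :=
      Finset.sum_le_sum_of_subset_of_nonneg
        (Finset.Icc_subset_Icc le_rfl (by omega)) (fun i _ _ => sq_nonneg _)
    have hv : v (-(m : ℤ)) = v x - ∑ t ∈ Finset.Icc (-(m : ℤ)) (x - 1), fdZ v t := by linarith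
    rw [hv]
    nlinarith [sq_nonneg (v x + (∑ t ∈ Finset.Icc (-(m : ℤ)) (x - 1), fdZ v t)),
      mul_le_mul hc hsub hsnn (le_of_lt hnpos), hsq]
  have hsum2 : n * v (-(m : ℤ)) ^ 2 ≤ 2 * S2 + n * (2 * n * D2) := by
    calc n * v (-(m : ℤ)) ^ 2 = ∑ _x ∈ I, v (-(m : ℤ)) ^ 2 := by
          rw [Finset.sum_const, nsmul_eq_mul, hI, cardI]
      _ ≤ ∑ x ∈ I, (2 * v x ^ 2 + 2 * n * D2) := Finset.sum_le_sum key
      _ = 2 * S2 + n * (2 * n * D2) := by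
          rw [Finset.sum_add_distrib, Finset.sum_const, nsmul_eq_mul, hI, cardI,
            ← Finset.mul_sum, ← hn, ← hI, ← hS2]
  have h1 : v (-(m : ℤ)) ^ 2 ≤ (2 * S2 + n * (2 * n * D2)) / n := by
    rw [le_div_iff₀ hnpos]; nlinarith [hsum2]
  calc v (-(m : ℤ)) ^ 2 ≤ (2 * S2 + n * (2 * n * D2)) / n := h1
    _ = 2 / n * S2 + 2 * n * D2 := by field_simp

/-- Estimate of the mixed term `Σ ∂u ∂v` with a constant `c < 3√2` and free parameter `η > 0`. -/
theorem mixed_term_estimate :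
    ∃ c : ℝ, c < 3 * Real.sqrt 2 ∧
      ∀ (u v : ℤ → ℝ) (m : ℕ), 1 < m → ∀ η : ℝ, 0 < η →
        |∑ x ∈ Finset.Icc (-(m : ℤ)) (m : ℤ), fdZ u x * fdZ v x| ≤
          1 / 2 * (2 * (m : ℝ) + 1) ^ 2 * (1 / η) *
              (∑ x ∈ Finset.Icc (-(m : ℤ)) (m : ℤ), bdZ (fdZ u) x ^ 2) +
            1 / 2 * (η / (2 * (m : ℝ) + 1) ^ 2) *
              (∑ x ∈ Finset.Icc (-(m : ℤ)) (m : ℤ), v x ^ 2) +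
            (2 * (m : ℝ) + 1) / (2 * η) *
              (fdZ u (-(m : ℤ) - 1) ^ 2 + fdZ u (m : ℤ) ^ 2) +
            c * η / 2 *
              (1 / (2 * (m : ℝ) + 1) ^ 2 *
                  (∑ x ∈ Finset.Icc (-(m : ℤ)) (m : ℤ), v x ^ 2) +
                ∑ x ∈ Finset.Icc (-(m : ℤ)) (m : ℤ), fdZ v x ^ 2) := by
  refine ⟨4, ?_, ?_⟩
  · have h2 : Real.sqrt 2 ^ 2 = 2 := Real.sq_sqrt (by norm_num)
    nlinarith [Real.sqrt_nonneg 2]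
  intro u v m hm η hη
  have htt := trace_top v m
  have htb := trace_bot v m
  set I := Finset.Icc (-(m : ℤ)) (m : ℤ) with hI
  set n : ℝ := 2 * (m : ℝ) + 1 with hn
  have hnpos : (0 : ℝ) < n := by positivity
  set S2 := ∑ x ∈ I, v x ^ 2 with hS2def
  set D2u := ∑ x ∈ I, bdZ (fdZ u) x ^ 2 with hD2udef
  set D2v := ∑ x ∈ I, fdZ v x ^ 2 with hD2vdef
  have hsbp : ∑ x ∈ I, fdZ u x * fdZ v x
      = ∑ x ∈ I, bdZ (fdZ u) x * v x + fdZ u (m : ℤ) * v ((m : ℤ) + 1)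
        - fdZ u (-(m : ℤ) - 1) * v (-(m : ℤ)) :=
    sumpartsZ (fdZ u) v (-(m : ℤ)) (m : ℤ) (by omega)
  set K1 : ℝ := n ^ 2 / η with hK1
  set K2 : ℝ := n / η with hK2
  have hK1pos : 0 < K1 := by positivity
  have hK2pos : 0 < K2 := by positivity
  have hT1 : |∑ x ∈ I, bdZ (fdZ u) x * v x| ≤ K1 / 2 * D2u + 1 / (2 * K1) * S2 := by
    calc |∑ x ∈ I, bdZ (fdZ u) x * v x| ≤ ∑ x ∈ I, |bdZ (fdZ u) x * v x| :=
          Finset.abs_sum_le_sum_abs _ _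
      _ ≤ ∑ x ∈ I, (K1 / 2 * bdZ (fdZ u) x ^ 2 + 1 / (2 * K1) * v x ^ 2) :=
          Finset.sum_le_sum fun x _ => by
            rw [abs_mul]
            simpa [sq_abs] using young K1 |bdZ (fdZ u) x| |v x| hK1pos
      _ = K1 / 2 * D2u + 1 / (2 * K1) * S2 := by
          rw [Finset.sum_add_distrib, ← Finset.mul_sum, ← Finset.mul_sum]
  have hbm : |fdZ u (m : ℤ) * v ((m : ℤ) + 1)| ≤
      K2 / 2 * fdZ u (m : ℤ) ^ 2 + 1 / (2 * K2) * v ((m : ℤ) + 1) ^ 2 := by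
    rw [abs_mul]
    simpa [sq_abs] using young K2 |fdZ u (m : ℤ)| |v ((m : ℤ) + 1)| hK2pos
  have hbl : |fdZ u (-(m : ℤ) - 1) * v (-(m : ℤ))| ≤
      K2 / 2 * fdZ u (-(m : ℤ) - 1) ^ 2 + 1 / (2 * K2) * v (-(m : ℤ)) ^ 2 := by
    rw [abs_mul]
    simpa [sq_abs] using young K2 |fdZ u (-(m : ℤ) - 1)| |v (-(m : ℤ))| hK2pos
  have htri : |∑ x ∈ I, fdZ u x * fdZ v x| ≤
      |∑ x ∈ I, bdZ (fdZ u) x * v x| + |fdZ u (m : ℤ) * v ((m : ℤ) + 1)|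
        + |fdZ u (-(m : ℤ) - 1) * v (-(m : ℤ))| := by
    rw [hsbp, sub_eq_add_neg]
    refine (abs_add_le _ _).trans ?_
    rw [abs_neg]
    exact add_le_add (abs_add_le _ _) le_rfl
  have h5 : 1 / (2 * K2) * v ((m : ℤ) + 1) ^ 2 ≤
      1 / (2 * K2) * (2 / n * S2 + 2 * n * D2v) :=
    mul_le_mul_of_nonneg_left htt (by positivity)
  have h6 : 1 / (2 * K2) * v (-(m : ℤ)) ^ 2 ≤
      1 / (2 * K2) * (2 / n * S2 + 2 * n * D2v) :=
    mul_le_mul_of_nonneg_left htb (by positivity)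
  have hη' : η ≠ 0 := ne_of_gt hη
  have hn' : n ≠ 0 := ne_of_gt hnpos
  have e1 : K1 / 2 * D2u = 1 / 2 * n ^ 2 * (1 / η) * D2u := by
    rw [hK1]; ring
  have e2 : 1 / (2 * K1) * S2 = 1 / 2 * (η / n ^ 2) * S2 := by
    rw [hK1]; field_simp
  have e3 : K2 / 2 * fdZ u (m : ℤ) ^ 2 + K2 / 2 * fdZ u (-(m : ℤ) - 1) ^ 2
      = n / (2 * η) * (fdZ u (-(m : ℤ) - 1) ^ 2 + fdZ u (m : ℤ) ^ 2) := by
    rw [hK2]; field_simp; ring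
  have e4 : 1 / (2 * K2) * (2 / n * S2 + 2 * n * D2v)
        + 1 / (2 * K2) * (2 / n * S2 + 2 * n * D2v)
      = 4 * η / 2 * (1 / n ^ 2 * S2 + D2v) := by
    rw [hK2]; field_simp; ring
  linarith [hT1, hbm, hbl, htri, h5, h6, e1, e2, e3, e4]
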